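/- (Lemma 2) Suppose two parent particles of invariant masses m₁ and m₂ are produced; for each n ∈ {1,2}, parent n has four-momentum equal to the sum of a visible four-momentum (E_v⁽ⁿ⁾, p_v⁽ⁿ⁾) and an invisible four-momentum (E_i⁽ⁿ⁾, p_i⁽ⁿ⁾), all four daughter four-momenta being causal (E ≥ |p|). Let m_v⁽ⁿ⁾ and vT⁽ⁿ⁾ be the invariant mass and transverse momentum of visible system n, and let pTmiss be the sum of the transverse momenta of the two invisible four-momenta. Then mT2(v₁, v₂, pTmiss, 0, 0) ≤ max(m₁, m₂). -/

import Mathlib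

open scoped RealInnerProductSpace

/-- Transverse energy `e(m,p) = √(m² + |p|²)`. -/
noncomputable def transverseEnergy (m : ℝ) (p : EuclideanSpace ℝ (Fin 2)) : ℝ :=
  Real.sqrt (m ^ 2 + ‖p‖ ^ 2)

/-- Transverse mass `m_T(m_v, vT, m_i, qT)`. -/
noncomputable def transverseMass (mv : ℝ) (vT : EuclideanSpace ℝ (Fin 2))
    (mi : ℝ) (qT : EuclideanSpace ℝ (Fin 2)) : ℝ :=
  Real.sqrt (mv ^ 2 + mi ^ 2 +
    2 * (transverseEnergy mv vT * transverseEnergy mi qT - ⟪vT, qT⟫))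

/-- `mT2(v₁, v₂, pTmiss, m_i⁽¹⁾, m_i⁽²⁾)`: the infimum over all partitions
`qT⁽¹⁾ + qT⁽²⁾ = pTmiss` of the larger of the two transverse masses. -/
noncomputable def mT2 (mv1 : ℝ) (vT1 : EuclideanSpace ℝ (Fin 2))
    (mv2 : ℝ) (vT2 : EuclideanSpace ℝ (Fin 2))
    (ptmiss : EuclideanSpace ℝ (Fin 2)) (mi1 mi2 : ℝ) : ℝ :=
  sInf {r : ℝ | ∃ q1 q2 : EuclideanSpace ℝ (Fin 2), q1 + q2 = ptmiss ∧
    r = max (transverseMass mv1 vT1 mi1 q1) (transverseMass mv2 vT2 mi2 q2)}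

/-- Projection of a 3-momentum onto the transverse plane (first two coordinates). -/
noncomputable def projT (p : EuclideanSpace ℝ (Fin 3)) : EuclideanSpace ℝ (Fin 2) :=
  WithLp.toLp 2 (fun i : Fin 2 => p i.castSucc)

/-- Invariant mass `√(E² − |p|²)` of a 3+1 four-momentum `(E, p)`. -/
noncomputable def invariantMass (E : ℝ) (p : EuclideanSpace ℝ (Fin 3)) : ℝ :=
  Real.sqrt (E ^ 2 - ‖p‖ ^ 2)

lemma norm_sq_split (x : EuclideanSpace ℝ (Fin 3)) :
    ‖x‖ ^ 2 = ‖projT x‖ ^ 2 + (x 2) ^ 2 := by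
  have h1 : ‖x‖ ^ 2 = ∑ i, x i ^ 2 := by
    rw [EuclideanSpace.norm_eq, Real.sq_sqrt (by positivity)]
    simp [sq_abs]
  have h2 : ‖projT x‖ ^ 2 = ∑ i : Fin 2, projT x i ^ 2 := by
    rw [EuclideanSpace.norm_eq, Real.sq_sqrt (by positivity)]
    simp [sq_abs]
  rw [h1, h2]
  simp [Fin.sum_univ_three, Fin.sum_univ_two, projT]

lemma inner_split (x y : EuclideanSpace ℝ (Fin 3)) :
    ⟪x, y⟫ = ⟪projT x, projT y⟫ + x 2 * y 2 := by
  simp [PiLp.inner_apply, Fin.sum_univ_three, Fin.sum_univ_two, projT, RCLike.inner_apply,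
    conj_trivial, mul_comm]

lemma transverseMass_le_invariantMass (Ev Ei : ℝ) (pv pinv : EuclideanSpace ℝ (Fin 3))
    (hv : ‖pv‖ ≤ Ev) (hi : ‖pinv‖ ≤ Ei) :
    transverseMass (invariantMass Ev pv) (projT pv) 0 (projT pinv) ≤
      invariantMass (Ev + Ei) (pv + pinv) := by
  have hpv0 : (0:ℝ) ≤ ‖pv‖ := norm_nonneg _
  have hpi0 : (0:ℝ) ≤ ‖pinv‖ := norm_nonneg _
  have hEv0 : (0:ℝ) ≤ Ev := le_trans hpv0 hv
  have hEi0 : (0:ℝ) ≤ Ei := le_trans hpi0 hi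
  set zv := pv 2 with hzv
  set zi := pinv 2 with hzi
  have hnv : ‖pv‖ ^ 2 = ‖projT pv‖ ^ 2 + zv ^ 2 := norm_sq_split pv
  have hni : ‖pinv‖ ^ 2 = ‖projT pinv‖ ^ 2 + zi ^ 2 := norm_sq_split pinv
  have hmv2 : (0:ℝ) ≤ Ev ^ 2 - ‖pv‖ ^ 2 := by nlinarith
  have hzvEv : zv ^ 2 ≤ Ev ^ 2 := by nlinarith [sq_nonneg ‖projT pv‖]
  have hziEi : zi ^ 2 ≤ Ei ^ 2 := by nlinarith [sq_nonneg ‖projT pinv‖]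
  have habs : zv * zi ≤ Ev * Ei := by
    calc zv * zi ≤ |zv * zi| := le_abs_self _
      _ = |zv| * |zi| := abs_mul _ _
      _ ≤ Ev * Ei := by
          apply mul_le_mul _ _ (abs_nonneg _) hEv0
          · rw [← Real.sqrt_sq_eq_abs, ← Real.sqrt_sq hEv0]
            exact Real.sqrt_le_sqrt hzvEv
          · rw [← Real.sqrt_sq_eq_abs, ← Real.sqrt_sq hEi0]
            exact Real.sqrt_le_sqrt hziEi
  have h4 : Real.sqrt (Ev ^ 2 - zv ^ 2) * ‖projT pinv‖ ≤ Ev * Ei - zv * zi := by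
    calc Real.sqrt (Ev ^ 2 - zv ^ 2) * ‖projT pinv‖
        ≤ Real.sqrt (Ev ^ 2 - zv ^ 2) * Real.sqrt (Ei ^ 2 - zi ^ 2) := by
          apply mul_le_mul_of_nonneg_left _ (Real.sqrt_nonneg _)
          rw [show ‖projT pinv‖ = Real.sqrt (‖projT pinv‖ ^ 2) from
            (Real.sqrt_sq (norm_nonneg _)).symm]
          apply Real.sqrt_le_sqrt; nlinarith
      _ = Real.sqrt ((Ev ^ 2 - zv ^ 2) * (Ei ^ 2 - zi ^ 2)) :=
          (Real.sqrt_mul (by linarith) _).symm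
      _ ≤ Real.sqrt ((Ev * Ei - zv * zi) ^ 2) := by
          apply Real.sqrt_le_sqrt; nlinarith [sq_nonneg (Ev * zi - Ei * zv)]
      _ = Ev * Ei - zv * zi := Real.sqrt_sq (by linarith)
  unfold transverseMass invariantMass transverseEnergy
  apply Real.sqrt_le_sqrt
  rw [Real.sq_sqrt hmv2]
  have heTv : Real.sqrt (Ev ^ 2 - ‖pv‖ ^ 2 + ‖projT pv‖ ^ 2) = Real.sqrt (Ev ^ 2 - zv ^ 2) := by
    congr 1; linarith
  rw [heTv]
  have hq : Real.sqrt ((0:ℝ) ^ 2 + ‖projT pinv‖ ^ 2) = ‖projT pinv‖ := by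
    simp [Real.sqrt_sq, norm_nonneg]
  rw [hq]
  have hadd : ‖pv + pinv‖ ^ 2 = ‖pv‖ ^ 2 + 2 * ⟪pv, pinv⟫ + ‖pinv‖ ^ 2 :=
    norm_add_sq_real pv pinv
  rw [hadd, inner_split]
  nlinarith [hni, h4]

/-- Lemma 2: for pair production of two parents of masses `m₁`, `m₂`,
each decaying to a visible and an invisible system,
`mT2(v₁, v₂, pTmiss, 0, 0) ≤ max(m₁, m₂)`. -/
theorem mT2_le_max_parent_masses (m : Fin 2 → ℝ) (Ev Ei : Fin 2 → ℝ)
    (pv pinv : Fin 2 → EuclideanSpace ℝ (Fin 3))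
    (hv : ∀ n, ‖pv n‖ ≤ Ev n) (hi : ∀ n, ‖pinv n‖ ≤ Ei n)
    (hm : ∀ n, invariantMass (Ev n + Ei n) (pv n + pinv n) = m n) :
    mT2 (invariantMass (Ev 0) (pv 0)) (projT (pv 0))
        (invariantMass (Ev 1) (pv 1)) (projT (pv 1))
        (projT (pinv 0) + projT (pinv 1)) 0 0 ≤ max (m 0) (m 1) := by
  have h0 : transverseMass (invariantMass (Ev 0) (pv 0)) (projT (pv 0)) 0 (projT (pinv 0)) ≤ m 0 :=
    (hm 0) ▸ transverseMass_le_invariantMass _ _ _ _ (hv 0) (hi 0)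
  have h1 : transverseMass (invariantMass (Ev 1) (pv 1)) (projT (pv 1)) 0 (projT (pinv 1)) ≤ m 1 :=
    (hm 1) ▸ transverseMass_le_invariantMass _ _ _ _ (hv 1) (hi 1)
  have hmem : max (transverseMass (invariantMass (Ev 0) (pv 0)) (projT (pv 0)) 0 (projT (pinv 0)))
      (transverseMass (invariantMass (Ev 1) (pv 1)) (projT (pv 1)) 0 (projT (pinv 1))) ∈
      {r : ℝ | ∃ q1 q2 : EuclideanSpace ℝ (Fin 2),
        q1 + q2 = projT (pinv 0) + projT (pinv 1) ∧
        r = max (transverseMass (invariantMass (Ev 0) (pv 0)) (projT (pv 0)) 0 q1)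
          (transverseMass (invariantMass (Ev 1) (pv 1)) (projT (pv 1)) 0 q2)} :=
    ⟨projT (pinv 0), projT (pinv 1), rfl, rfl⟩
  have hbdd : BddBelow {r : ℝ | ∃ q1 q2 : EuclideanSpace ℝ (Fin 2),
      q1 + q2 = projT (pinv 0) + projT (pinv 1) ∧
      r = max (transverseMass (invariantMass (Ev 0) (pv 0)) (projT (pv 0)) 0 q1)
        (transverseMass (invariantMass (Ev 1) (pv 1)) (projT (pv 1)) 0 q2)} := by
    refine ⟨0, ?_⟩
    rintro r ⟨q1, q2, -, rfl⟩
    exact le_max_of_le_left (Real.sqrt_nonneg _)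
  exact le_trans (csInf_le hbdd hmem) (max_le_max h0 h1)
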